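/- For every $a>0$ and all $\xi,\eta\in\mathbb{R}^3$ with $\xi\ne\eta$, $e^{-a|\xi-\eta|} = \frac{a}{2\pi}\int_{\mathbb{R}^3} \frac{e^{-a|x-\xi|}}{|x-\xi|}\cdot\frac{e^{-a|x-\eta|}}{|x-\eta|}\,dx$. -/

import Mathlib

open Real Set MeasureTheory

noncomputable section
namespace Yukawa


theorem my_lintegral_comp_polarCoord_symm (g : ℝ × ℝ → ENNReal) :
    ∫⁻ p, g p = ∫⁻ p in polarCoord.target, ENNReal.ofReal p.1 * g (polarCoord.symm p) := by
  set B : ℝ × ℝ → ℝ × ℝ →L[ℝ] ℝ × ℝ := fun p =>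
    LinearMap.toContinuousLinearMap (Matrix.toLin (Module.Basis.finTwoProd ℝ) (Module.Basis.finTwoProd ℝ)
      !![Real.cos p.2, -p.1 * Real.sin p.2; Real.sin p.2, p.1 * Real.cos p.2])
  have B_det : ∀ p, (B p).det = p.1 := by
    intro p
    conv_rhs => rw [← one_mul p.1, ← cos_sq_add_sin_sq p.2]
    simp only [B, neg_mul, LinearMap.det_toContinuousLinearMap, LinearMap.det_toLin,
      Matrix.det_fin_two_of, sub_neg_eq_add]
    ring
  have h1 : ∫⁻ p, g p = ∫⁻ p in polarCoord.source, g p := by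
    rw [← setLIntegral_univ]
    exact (setLIntegral_congr polarCoord_source_ae_eq_univ).symm
  rw [h1, ← polarCoord.symm_image_target_eq_source,
    lintegral_image_eq_lintegral_abs_det_fderiv_mul volume
      (polarCoord.open_target.measurableSet)
      (fun p _ => (hasFDerivAt_polarCoord_symm p).hasFDerivWithinAt)
      (polarCoord.symm.injOn) g]
  refine setLIntegral_congr_fun polarCoord.open_target.measurableSet (
    fun p hp => ?_)
  rw [det_fderivPolarCoordSymm, abs_of_pos hp.1]


def Dset (R : ℝ) : Set (ℝ × ℝ) := {s | 0 < s.1 ∧ 0 < s.2 ∧ |s.1 - s.2| < R ∧ R < s.1 + s.2}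

def zf (R : ℝ) (s : ℝ × ℝ) : ℝ := (s.1 ^ 2 - s.2 ^ 2 + R ^ 2) / (2 * R)

def rf (R : ℝ) (s : ℝ × ℝ) : ℝ := √(s.1 ^ 2 - zf R s ^ 2)

def Phi (R : ℝ) (s : ℝ × ℝ) : ℝ × ℝ := (zf R s, rf R s)

variable {R : ℝ}

lemma key_pos (hR : 0 < R) {s : ℝ × ℝ} (hs : s ∈ Dset R) : 0 < s.1 ^ 2 - zf R s ^ 2 := by
  obtain ⟨h1, h2, h3, h4⟩ := hs
  rw [abs_lt] at h3
  have hRne : R ≠ 0 := hR.ne'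
  have e1 : s.1 ^ 2 - zf R s ^ 2 =
      ((s.2 - s.1 + R) * (s.1 + s.2 - R)) * ((s.1 + R - s.2) * (s.1 + R + s.2)) / (2 * R) ^ 2 := by
    rw [zf]; field_simp; ring
  rw [e1]
  have : (0:ℝ) < (2 * R) ^ 2 := by positivity
  apply div_pos _ this
  apply mul_pos (mul_pos (by linarith) (by linarith)) (mul_pos (by linarith) (by linarith))

lemma rf_pos (hR : 0 < R) {s : ℝ × ℝ} (hs : s ∈ Dset R) : 0 < rf R s :=
  Real.sqrt_pos.2 (key_pos hR hs)

lemma sq_rf (hR : 0 < R) {s : ℝ × ℝ} (hs : s ∈ Dset R) :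
    rf R s ^ 2 = s.1 ^ 2 - zf R s ^ 2 :=
  Real.sq_sqrt (key_pos hR hs).le

lemma sq_two_of_zf (hR : 0 < R) (s : ℝ × ℝ) :
    s.2 ^ 2 = s.1 ^ 2 + R ^ 2 - 2 * R * zf R s := by
  rw [zf]; field_simp; ring

lemma measurableSet_Dset : MeasurableSet (Dset R) := by
  have : Dset R = {s : ℝ × ℝ | 0 < s.1} ∩ ({s | 0 < s.2} ∩
      ({s | |s.1 - s.2| < R} ∩ {s | R < s.1 + s.2})) := rfl
  rw [this]
  refine (measurableSet_lt measurable_const measurable_fst).inter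
    ((measurableSet_lt measurable_const measurable_snd).inter
      (((measurableSet_lt ((measurable_fst.sub measurable_snd).abs) measurable_const)).inter
        (measurableSet_lt measurable_const (measurable_fst.add measurable_snd))))

lemma image_Phi (hR : 0 < R) : Phi R '' Dset R = (univ : Set ℝ) ×ˢ Ioi (0:ℝ) := by
  apply Subset.antisymm
  · rintro - ⟨s, hs, rfl⟩
    exact ⟨mem_univ _, Real.sqrt_pos.2 (key_pos hR hs)⟩
  · rintro ⟨z, ρ⟩ ⟨-, hρ⟩
    simp only [mem_Ioi] at hρ
    set A := √(ρ ^ 2 + z ^ 2) with hA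
    set B := √(ρ ^ 2 + (z - R) ^ 2) with hB
    have hA2 : A ^ 2 = ρ ^ 2 + z ^ 2 := Real.sq_sqrt (by positivity)
    have hB2 : B ^ 2 = ρ ^ 2 + (z - R) ^ 2 := Real.sq_sqrt (by positivity)
    have hAgt : |z| < A := by
      rw [hA, ← Real.sqrt_sq_eq_abs]
      exact Real.sqrt_lt_sqrt (sq_nonneg z) (by nlinarith)
    have hBgt : |z - R| < B := by
      rw [hB, ← Real.sqrt_sq_eq_abs]
      exact Real.sqrt_lt_sqrt (sq_nonneg _) (by nlinarith)
    have hApos : 0 < A := (abs_nonneg z).trans_lt hAgt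
    have hBpos : 0 < B := (abs_nonneg _).trans_lt hBgt
    have hz1 : z ≤ |z| := le_abs_self z
    have hz2 : -z ≤ |z| := neg_le_abs z
    have hz3 : z - R ≤ |z - R| := le_abs_self _
    have hz4 : -(z - R) ≤ |z - R| := neg_le_abs _
    have hmem : (A, B) ∈ Dset R := by
      refine ⟨hApos, hBpos, abs_lt.2 ⟨?_, ?_⟩, ?_⟩
      · nlinarith
      · nlinarith
      · linarith
    refine ⟨(A, B), hmem, ?_⟩
    have hzc : zf R (A, B) = z := by
      simp only [zf]
      rw [hA2, hB2]; field_simp; ring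
    have hrc : rf R (A, B) = ρ := by
      rw [rf, hzc]
      simp only [hA2]
      rw [show ρ ^ 2 + z ^ 2 - z ^ 2 = ρ ^ 2 by ring, Real.sqrt_sq hρ.le]
    rw [Phi, hzc, hrc]

lemma injOn_Phi (hR : 0 < R) : InjOn (Phi R) (Dset R) := by
  intro s hs t ht h
  have hz : zf R s = zf R t := congrArg Prod.fst h
  have hr : rf R s = rf R t := congrArg Prod.snd h
  have hr2 : s.1 ^ 2 - zf R s ^ 2 = t.1 ^ 2 - zf R t ^ 2 := by
    rw [← sq_rf hR hs, ← sq_rf hR ht, hr]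
  have h1 : s.1 ^ 2 = t.1 ^ 2 := by rw [hz] at hr2; linarith
  have h1' : s.1 = t.1 := by
    rw [← Real.sqrt_sq hs.1.le, ← Real.sqrt_sq ht.1.le, h1]
  have h2 : s.2 ^ 2 = t.2 ^ 2 := by
    rw [sq_two_of_zf hR s, sq_two_of_zf hR t, h1, hz]
  have h2' : s.2 = t.2 := by
    rw [← Real.sqrt_sq hs.2.1.le, ← Real.sqrt_sq ht.2.1.le, h2]
  exact Prod.ext h1' h2'

def Bmat (R : ℝ) (s : ℝ × ℝ) : ℝ × ℝ →L[ℝ] ℝ × ℝ :=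
  LinearMap.toContinuousLinearMap (Matrix.toLin (Module.Basis.finTwoProd ℝ) (Module.Basis.finTwoProd ℝ)
    !![s.1 / R, -s.2 / R;
       (s.1 - zf R s * s.1 / R) / rf R s, zf R s * s.2 / (R * rf R s)])

lemma det_Bmat (hR : 0 < R) {s : ℝ × ℝ} (hs : s ∈ Dset R) :
    (Bmat R s).det = s.1 * s.2 / (R * rf R s) := by
  have hρ : rf R s ≠ 0 := (rf_pos hR hs).ne'
  simp only [Bmat, LinearMap.det_toContinuousLinearMap, LinearMap.det_toLin,
    Matrix.det_fin_two_of]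
  field_simp
  ring

lemma hasFDerivAt_Phi (hR : 0 < R) {s : ℝ × ℝ} (hs : s ∈ Dset R) :
    HasFDerivAt (Phi R) (Bmat R s) s := by
  have hρpos := key_pos hR hs
  have hρ : rf R s ≠ 0 := (rf_pos hR hs).ne'
  have hRne : R ≠ 0 := hR.ne'
  rw [Bmat, Matrix.toLin_finTwoProd_toContinuousLinearMap]
  have h1 : HasFDerivAt (fun p : ℝ × ℝ => p.1 ^ 2)
      (((2:ℕ) * s.1 ^ 1) • ContinuousLinearMap.fst ℝ ℝ ℝ) s :=
    (hasDerivAt_pow 2 s.1).comp_hasFDerivAt s hasFDerivAt_fst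
  have h2 : HasFDerivAt (fun p : ℝ × ℝ => p.2 ^ 2)
      (((2:ℕ) * s.2 ^ 1) • ContinuousLinearMap.snd ℝ ℝ ℝ) s :=
    (hasDerivAt_pow 2 s.2).comp_hasFDerivAt s hasFDerivAt_snd
  have hz : HasFDerivAt (zf R)
      ((s.1 / R) • ContinuousLinearMap.fst ℝ ℝ ℝ +
        (-s.2 / R) • ContinuousLinearMap.snd ℝ ℝ ℝ) s := by
    have hfun : zf R = fun p : ℝ × ℝ => (2 * R)⁻¹ * (p.1 ^ 2 - p.2 ^ 2 + R ^ 2) := by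
      funext p; rw [zf]; ring
    rw [hfun]
    refine (((h1.sub h2).add_const (R ^ 2)).const_mul ((2 * R)⁻¹)).congr_fderiv ?_
    ext <;> · simp; field_simp
  have hw : HasFDerivAt (fun p : ℝ × ℝ => p.1 ^ 2 - zf R p ^ 2)
      (((2:ℕ) * s.1 ^ 1) • ContinuousLinearMap.fst ℝ ℝ ℝ -
        ((2:ℕ) * zf R s ^ 1) • ((s.1 / R) • ContinuousLinearMap.fst ℝ ℝ ℝ +
          (-s.2 / R) • ContinuousLinearMap.snd ℝ ℝ ℝ)) s :=
    h1.sub ((hasDerivAt_pow 2 (zf R s)).comp_hasFDerivAt s hz)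
  have hsq : HasDerivAt Real.sqrt (1 / (2 * √(s.1 ^ 2 - zf R s ^ 2))) (s.1 ^ 2 - zf R s ^ 2) :=
    Real.hasDerivAt_sqrt hρpos.ne'
  have hρd : HasFDerivAt (rf R)
      (((s.1 - zf R s * s.1 / R) / rf R s) • ContinuousLinearMap.fst ℝ ℝ ℝ +
        (zf R s * s.2 / (R * rf R s)) • ContinuousLinearMap.snd ℝ ℝ ℝ) s := by
    have hrfs : rf R s = √(s.1 ^ 2 - zf R s ^ 2) := rfl
    refine (hsq.comp_hasFDerivAt s hw).congr_fderiv ?_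
    ext <;> · simp [← hrfs]; field_simp
  exact hz.prodMk hρd

theorem lintegral_cov (hR : 0 < R) (g : ℝ × ℝ → ENNReal) :
    ∫⁻ p in (univ : Set ℝ) ×ˢ Ioi (0:ℝ), g p
      = ∫⁻ s in Dset R, ENNReal.ofReal (s.1 * s.2 / (R * rf R s)) * g (Phi R s) := by
  rw [← image_Phi hR,
    lintegral_image_eq_lintegral_abs_det_fderiv_mul volume measurableSet_Dset
      (fun s hs => (hasFDerivAt_Phi hR hs).hasFDerivWithinAt) (injOn_Phi hR) g]
  refine setLIntegral_congr_fun measurableSet_Dset (fun s hs => ?_)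
  rw [det_Bmat hR hs, abs_of_pos]
  exact div_pos (mul_pos hs.1 hs.2.1) (mul_pos hR (rf_pos hR hs))

lemma intervalIntegral_exp_neg_mul {b : ℝ} (hb : b ≠ 0) (l u : ℝ) :
    ∫ y in l..u, Real.exp (-b * y) = (Real.exp (-b * l) - Real.exp (-b * u)) / b := by
  have hd : ∀ y : ℝ, HasDerivAt (fun t => -Real.exp (-b * t) / b) (Real.exp (-b * y)) y := by
    intro y
    have h1 : HasDerivAt (fun t : ℝ => -b * t) (-b) y := by
      simpa using (hasDerivAt_id y).const_mul (-b)
    have h2 := (h1.exp.div_const b).neg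
    have h3 := h2.congr_deriv (show _ = Real.exp (-b * y) by
      rw [mul_neg, neg_div, neg_neg, mul_div_assoc, div_self hb, mul_one])
    refine h3.congr_of_eventuallyEq (Filter.Eventually.of_forall fun t => ?_)
    simp [neg_div]
  rw [intervalIntegral.integral_eq_sub_of_hasDerivAt (fun y _ => hd y)
    ((Real.continuous_exp.comp (continuous_const.mul continuous_id)).intervalIntegrable l u)]
  ring

lemma integrableOn_exp_neg_mul_Ioo {b : ℝ} (l u : ℝ) :
    IntegrableOn (fun y => Real.exp (-b * y)) (Ioo l u) := by
  apply IntegrableOn.mono_set (t := Icc l u) _ Ioo_subset_Icc_self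
  exact (Real.continuous_exp.comp (continuous_const.mul continuous_id)).integrableOn_Icc

lemma lint_exp_Ioo {b : ℝ} (hb : 0 < b) {l u : ℝ} (h : l ≤ u) :
    ∫⁻ y in Ioo l u, ENNReal.ofReal (Real.exp (-b * y))
      = ENNReal.ofReal ((Real.exp (-b * l) - Real.exp (-b * u)) / b) := by
  rw [← ofReal_integral_eq_lintegral_ofReal (integrableOn_exp_neg_mul_Ioo l u)
    (Filter.Eventually.of_forall fun y => (Real.exp_pos _).le)]
  congr 1
  rw [← integral_Ioc_eq_integral_Ioo, ← intervalIntegral.integral_of_le h,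
    intervalIntegral_exp_neg_mul hb.ne']

lemma integral_exp_neg_mul_Ioi {b : ℝ} (hb : 0 < b) (c : ℝ) :
    ∫ x in Ioi c, Real.exp (-b * x) = Real.exp (-b * c) / b := by
  have hd : ∀ x ∈ Ici c, HasDerivAt (fun t => -Real.exp (-b * t) / b) (Real.exp (-b * x)) x := by
    intro x _
    have h1 : HasDerivAt (fun t : ℝ => -b * t) (-b) x := by
      simpa using (hasDerivAt_id x).const_mul (-b)
    have h2 := (h1.exp.div_const b).neg
    have h3 := h2.congr_deriv (show _ = Real.exp (-b * x) by
      rw [mul_neg, neg_div, neg_neg, mul_div_assoc, div_self hb.ne', mul_one])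
    refine h3.congr_of_eventuallyEq (Filter.Eventually.of_forall fun t => ?_)
    simp [neg_div]
  have htend : Filter.Tendsto (fun t => -Real.exp (-b * t) / b) Filter.atTop (nhds 0) := by
    have : Filter.Tendsto (fun t : ℝ => -b * t) Filter.atTop Filter.atBot :=
      Filter.tendsto_id.const_mul_atTop_of_neg (by linarith)
    have := (Real.tendsto_exp_atBot.comp this).neg.div_const b
    simpa using this
  have := integral_Ioi_of_hasDerivAt_of_tendsto' hd (exp_neg_integrableOn_Ioi c hb) htend
  rw [this]
  field_simp
  ring

theorem J_val {a R : ℝ} (ha : 0 < a) (hR : 0 < R) :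
    ∫⁻ s in Dset R, ENNReal.ofReal (Real.exp (-a * s.1) * Real.exp (-a * s.2))
      = ENNReal.ofReal (R * Real.exp (-a * R) / a) := by
  set S : Set (ℝ × ℝ) := {p : ℝ × ℝ | 0 < p.1 ∧ p.2 ∈ Ioo (|R - p.1|) (p.1 + R)} with hS
  have hDeq : Dset R = S := by
    ext p
    simp only [Dset, S, mem_setOf_eq, mem_Ioo, abs_lt]
    constructor
    · rintro ⟨h1, h2, ⟨h3, h4⟩, h5⟩
      exact ⟨h1, ⟨by linarith, by linarith⟩, by linarith⟩
    · rintro ⟨h1, ⟨h2, h3⟩, h4⟩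
      exact ⟨h1, by linarith, ⟨by linarith, by linarith⟩, by linarith⟩
  have hSm : MeasurableSet S := by
    have : S = {p : ℝ × ℝ | 0 < p.1} ∩ ({p | |R - p.1| < p.2} ∩ {p | p.2 < p.1 + R}) := rfl
    rw [this]
    exact (measurableSet_lt measurable_const measurable_fst).inter
      ((measurableSet_lt ((measurable_const.sub measurable_fst).abs) measurable_snd).inter
        (measurableSet_lt measurable_snd (measurable_fst.add measurable_const)))
  have hmeas : Measurable fun p : ℝ × ℝ =>
      ENNReal.ofReal (Real.exp (-a * p.1) * Real.exp (-a * p.2)) := by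
    apply Measurable.ennreal_ofReal
    exact ((Real.measurable_exp.comp (measurable_fst.const_mul (-a))).mul
      (Real.measurable_exp.comp (measurable_snd.const_mul (-a))))
  set g : ℝ → ℝ := fun x =>
    Real.exp (-a * x) * ((Real.exp (-a * |R - x|) - Real.exp (-a * (x + R))) / a) with hg
  have step1 : ∫⁻ s in Dset R, ENNReal.ofReal (Real.exp (-a * s.1) * Real.exp (-a * s.2))
      = ∫⁻ x in Ioi 0, ENNReal.ofReal (g x) := by
    rw [hDeq, ← lintegral_indicator hSm, Measure.volume_eq_prod,
      lintegral_prod _ ((hmeas.indicator hSm).aemeasurable)]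
    rw [← lintegral_indicator measurableSet_Ioi]
    refine lintegral_congr fun x => ?_
    by_cases hx : 0 < x
    · have hxy : ∀ y, S.indicator
          (fun p : ℝ × ℝ => ENNReal.ofReal (Real.exp (-a * p.1) * Real.exp (-a * p.2))) (x, y)
          = (Ioo (|R - x|) (x + R)).indicator
              (fun y => ENNReal.ofReal (Real.exp (-a * x) * Real.exp (-a * y))) y := by
        intro y
        by_cases hy : y ∈ Ioo (|R - x|) (x + R)
        · rw [Set.indicator_of_mem hy, Set.indicator_of_mem (by exact ⟨hx, hy⟩)]
        · rw [Set.indicator_of_notMem hy, Set.indicator_of_notMem (fun hmem => hy hmem.2)]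
      simp only [hxy]
      rw [lintegral_indicator measurableSet_Ioo,
        Set.indicator_of_mem (mem_Ioi.2 hx)]
      have hlu : |R - x| ≤ x + R := abs_le.2 ⟨by linarith, by linarith⟩
      calc ∫⁻ y in Ioo (|R - x|) (x + R),
            ENNReal.ofReal (Real.exp (-a * x) * Real.exp (-a * y))
          = ∫⁻ y in Ioo (|R - x|) (x + R),
            ENNReal.ofReal (Real.exp (-a * x)) * ENNReal.ofReal (Real.exp (-a * y)) := by
            simp only [ENNReal.ofReal_mul (Real.exp_pos _).le]
        _ = ENNReal.ofReal (Real.exp (-a * x)) *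
            ∫⁻ y in Ioo (|R - x|) (x + R), ENNReal.ofReal (Real.exp (-a * y)) :=
            lintegral_const_mul' _ _ ENNReal.ofReal_ne_top
        _ = ENNReal.ofReal (Real.exp (-a * x)) *
            ENNReal.ofReal ((Real.exp (-a * |R - x|) - Real.exp (-a * (x + R))) / a) := by
            rw [lint_exp_Ioo ha hlu]
        _ = ENNReal.ofReal (g x) := by
            rw [← ENNReal.ofReal_mul (Real.exp_pos _).le]
    · have h0 : ∀ y, S.indicator
          (fun p : ℝ × ℝ => ENNReal.ofReal (Real.exp (-a * p.1) * Real.exp (-a * p.2))) (x, y)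
          = 0 := fun y => Set.indicator_of_notMem (fun hmem => hx hmem.1) _
      simp only [h0, lintegral_zero, Set.indicator_of_notMem (fun h => hx (mem_Ioi.1 h))]
  have hgc : Continuous g := by
    have h1 : Continuous fun x : ℝ => Real.exp (-a * x) :=
      Real.continuous_exp.comp (continuous_const.mul continuous_id)
    have h2 : Continuous fun x : ℝ => Real.exp (-a * |R - x|) :=
      Real.continuous_exp.comp (continuous_const.mul (continuous_const.sub continuous_id).abs)
    have h3 : Continuous fun x : ℝ => Real.exp (-a * (x + R)) :=
      Real.continuous_exp.comp (continuous_const.mul (continuous_id.add continuous_const))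
    exact h1.mul ((h2.sub h3).div_const a)
  have hgpt : ∀ x ∈ Ioi (0:ℝ), 0 ≤ g x ∧ g x ≤ (1/a) * Real.exp (-a * x) := by
    intro x hx
    have hx0 : 0 < x := hx
    have h1 : |R - x| ≤ x + R := abs_le.2 ⟨by linarith, by linarith⟩
    have h2 : Real.exp (-a * (x + R)) ≤ Real.exp (-a * |R - x|) :=
      Real.exp_le_exp.2 (by nlinarith)
    have h3 : Real.exp (-a * |R - x|) ≤ 1 :=
      Real.exp_le_one_iff.2 (by nlinarith [abs_nonneg (R - x)])
    have hBpos : 0 < Real.exp (-a * (x + R)) := Real.exp_pos _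
    constructor
    · exact mul_nonneg (Real.exp_pos _).le (div_nonneg (by linarith) ha.le)
    · calc g x ≤ Real.exp (-a * x) * (1 / a) := by
            refine mul_le_mul_of_nonneg_left ?_ (Real.exp_pos _).le
            gcongr
            linarith
        _ = (1/a) * Real.exp (-a * x) := by ring
  have hInt : IntegrableOn g (Ioi 0) := by
    refine Integrable.mono ((exp_neg_integrableOn_Ioi 0 ha).const_mul (1/a))
      hgc.aestronglyMeasurable.restrict ?_
    filter_upwards [ae_restrict_mem measurableSet_Ioi] with x hx
    obtain ⟨h0, hle⟩ := hgpt x hx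
    rw [Real.norm_eq_abs, Real.norm_eq_abs, abs_of_nonneg h0, abs_of_nonneg (by positivity)]
    exact hle
  have step2 : ∫⁻ x in Ioi 0, ENNReal.ofReal (g x) = ENNReal.ofReal (∫ x in Ioi 0, g x) := by
    rw [← ofReal_integral_eq_lintegral_ofReal hInt ?_]
    filter_upwards [ae_restrict_mem measurableSet_Ioi] with x hx using (hgpt x hx).1
  have hval : ∫ x in Ioi (0:ℝ), g x = R * Real.exp (-a * R) / a := by
    have hsub1 : Ioc (0:ℝ) R ⊆ Ioi 0 := Ioc_subset_Ioi_self
    have hsub2 : Ioi R ⊆ Ioi (0:ℝ) := Ioi_subset_Ioi hR.le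
    rw [← Ioc_union_Ioi_eq_Ioi hR.le, setIntegral_union (Ioc_disjoint_Ioi le_rfl)
      measurableSet_Ioi (hInt.mono_set hsub1) (hInt.mono_set hsub2)]
    have hp1 : ∫ x in Ioc 0 R, g x
        = ∫ x in Ioc 0 R,
            (Real.exp (-a*R)/a - Real.exp (-a*R)/a * Real.exp (-(2*a)*x)) := by
      refine setIntegral_congr_fun measurableSet_Ioc fun x hx => ?_
      have e1 : Real.exp (-a*x) * Real.exp (-a*(R-x)) = Real.exp (-a*R) := by
        rw [← Real.exp_add]; ring_nf
      have e2 : Real.exp (-a*x) * Real.exp (-a*(x+R))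
          = Real.exp (-a*R) * Real.exp (-(2*a)*x) := by
        rw [← Real.exp_add, ← Real.exp_add]; ring_nf
      simp only [hg]
      rw [abs_of_nonneg (by linarith [hx.2] : (0:ℝ) ≤ R - x)]
      rw [← mul_div_assoc, mul_sub, e1, e2]
      ring
    have hc2 : Continuous fun x : ℝ => Real.exp (-(2*a)*x) :=
      Real.continuous_exp.comp (continuous_const.mul continuous_id)
    have hp1v : ∫ x in Ioc 0 R,
          (Real.exp (-a*R)/a - Real.exp (-a*R)/a * Real.exp (-(2*a)*x))
        = Real.exp (-a*R)/a * R
          - Real.exp (-a*R)/a * ((1 - Real.exp (-(2*a)*R))/(2*a)) := by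
      rw [← intervalIntegral.integral_of_le hR.le]
      rw [intervalIntegral.integral_sub (intervalIntegrable_const)
        ((hc2.intervalIntegrable _ _).const_mul _)]
      rw [intervalIntegral.integral_const, intervalIntegral.integral_const_mul,
        intervalIntegral_exp_neg_mul (by positivity : (2*a) ≠ 0)]
      simp only [mul_zero, Real.exp_zero, smul_eq_mul, sub_zero]
      ring
    have hp2 : ∫ x in Ioi R, g x
        = ((Real.exp (a*R) - Real.exp (-a*R))/a) * (Real.exp (-(2*a)*R)/(2*a)) := by
      have hcg : ∫ x in Ioi R, g x
          = ∫ x in Ioi R, ((Real.exp (a*R) - Real.exp (-a*R))/a) * Real.exp (-(2*a)*x) := by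
        refine setIntegral_congr_fun measurableSet_Ioi fun x hx => ?_
        have e3 : Real.exp (-a*x) * Real.exp (-a*(x-R))
            = Real.exp (a*R) * Real.exp (-(2*a)*x) := by
          rw [← Real.exp_add, ← Real.exp_add]; ring_nf
        have e4 : Real.exp (-a*x) * Real.exp (-a*(x+R))
            = Real.exp (-a*R) * Real.exp (-(2*a)*x) := by
          rw [← Real.exp_add, ← Real.exp_add]; ring_nf
        simp only [hg]
        rw [show |R - x| = x - R by
          rw [abs_of_nonpos (by linarith [mem_Ioi.1 hx])]; ring]
        rw [← mul_div_assoc, mul_sub, e3, e4]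
        ring
      rw [hcg, integral_const_mul, integral_exp_neg_mul_Ioi (by positivity) R]
    rw [hp1, hp1v, hp2]
    have hE : Real.exp (a*R) * Real.exp (-a*R) = 1 := by
      rw [← Real.exp_add]; simp
    have hE2 : Real.exp (-(2*a)*R) = Real.exp (-a*R) * Real.exp (-a*R) := by
      rw [← Real.exp_add]; ring_nf
    rw [hE2]
    linear_combination (Real.exp (-a*R) / (2*a^2)) * hE
  rw [step1, step2, hval]


theorem yukawa_gram_identity (a : ℝ) (ha : 0 < a)
    (ξ η : EuclideanSpace ℝ (Fin 3)) (hne : ξ ≠ η) :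
    Real.exp (-a * dist ξ η) =
      a / (2 * Real.pi) *
        ∫ x : EuclideanSpace ℝ (Fin 3),
          Real.exp (-a * dist x ξ) / dist x ξ * (Real.exp (-a * dist x η) / dist x η) := by
  set R := dist ξ η with hRdef
  have hR : 0 < R := dist_pos.2 hne
  set f : EuclideanSpace ℝ (Fin 3) → ℝ := fun x =>
    Real.exp (-a * dist x ξ) / dist x ξ * (Real.exp (-a * dist x η) / dist x η) with hf
  have hf_nonneg : ∀ x, 0 ≤ f x := fun x =>
    mul_nonneg (div_nonneg (Real.exp_pos _).le dist_nonneg)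
      (div_nonneg (Real.exp_pos _).le dist_nonneg)
  have hdm1 : Measurable fun x : EuclideanSpace ℝ (Fin 3) => dist x ξ :=
    (continuous_id.dist continuous_const).measurable
  have hdm2 : Measurable fun x : EuclideanSpace ℝ (Fin 3) => dist x η :=
    (continuous_id.dist continuous_const).measurable
  have hf_meas : Measurable f :=
    ((Real.measurable_exp.comp (hdm1.const_mul (-a))).div hdm1).mul
      ((Real.measurable_exp.comp (hdm2.const_mul (-a))).div hdm2)
  -- setup of the measure-preserving map
  set w₀ : EuclideanSpace ℝ (Fin 3) := EuclideanSpace.single (0 : Fin 3) R with hw₀def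
  have hw₀ : ‖w₀‖ = R := by
    rw [hw₀def, EuclideanSpace.norm_single, Real.norm_eq_abs, abs_of_pos hR]
  set T := Submodule.reflection (ℝ ∙ (w₀ - (η - ξ)))ᗮ with hTdef
  have hT : T w₀ = η - ξ := Submodule.reflection_sub (by rw [hw₀, ← dist_eq_norm, dist_comm, hRdef])
  set y : ℝ × ℝ × ℝ → EuclideanSpace ℝ (Fin 3) := fun p =>
    (MeasurableEquiv.toLp 2 (Fin 3 → ℝ))
      ((MeasurableEquiv.piFinSuccAbove (fun _ : Fin 3 => ℝ) 0).symm
        (p.1, (MeasurableEquiv.finTwoArrow (α := ℝ)).symm p.2)) with hydef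
  set Ψ : ℝ × ℝ × ℝ → EuclideanSpace ℝ (Fin 3) := fun p => T (y p) + ξ with hΨdef
  have hΨ : MeasurePreserving Ψ volume volume :=
    (measurePreserving_add_right volume ξ).comp
      (T.measurePreserving.comp
        (((EuclideanSpace.volume_preserving_symm_measurableEquiv_toLp (Fin 3)).symm).comp
          (((volume_preserving_piFinSuccAbove (fun _ : Fin 3 => ℝ) 0).symm).comp
            ((MeasurePreserving.id volume).prod
              ((volume_preserving_finTwoArrow (α := ℝ)).symm)))))
  have hcast : ∀ (h : ℝ = ℝ) (x : ℝ), cast h x = x := fun h x => rfl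
  have hcoe : ∀ u : Fin 3 → ℝ, ∀ i, (MeasurableEquiv.toLp 2 (Fin 3 → ℝ)) u i = u i :=
    fun u i => rfl
  have hcoord1 : ∀ p : ℝ × ℝ × ℝ,
      dist (Ψ p) ξ = √(p.1 ^ 2 + p.2.1 ^ 2 + p.2.2 ^ 2) := by
    intro p
    rw [hΨdef]
    simp only [dist_eq_norm, add_sub_cancel_right, LinearIsometryEquiv.norm_map]
    rw [EuclideanSpace.norm_eq]
    congr 1
    rw [Fin.sum_univ_three, hydef]
    simp only [MeasurableEquiv.piFinSuccAbove_symm_apply, Fin.insertNth_zero,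
      MeasurableEquiv.finTwoArrow_symm_apply, hcoe, Fin.consEquiv_apply,
      Fin.cons_zero, show (1 : Fin 3) = Fin.succ 0 from rfl,
      show (2 : Fin 3) = Fin.succ 1 from rfl, Fin.cons_succ,
      Fin.insertNthEquiv_apply, Real.norm_eq_abs, sq_abs,
      show (1 : Fin 2) = Fin.succ 0 from rfl, hcast]
  have hcoord2 : ∀ p : ℝ × ℝ × ℝ,
      dist (Ψ p) η = √((p.1 - R) ^ 2 + p.2.1 ^ 2 + p.2.2 ^ 2) := by
    intro p
    rw [hΨdef]
    dsimp only
    rw [dist_eq_norm, show T (y p) + ξ - η = T (y p) - T w₀ by rw [hT]; abel,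
      ← LinearIsometryEquiv.map_sub, LinearIsometryEquiv.norm_map]
    rw [EuclideanSpace.norm_eq]
    congr 1
    rw [Fin.sum_univ_three, hydef]
    simp only [PiLp.sub_apply, hw₀def, EuclideanSpace.single_apply]
    simp only [MeasurableEquiv.piFinSuccAbove_symm_apply, Fin.insertNth_zero,
      MeasurableEquiv.finTwoArrow_symm_apply, hcoe, Fin.consEquiv_apply,
      Fin.cons_zero, show (1 : Fin 3) = Fin.succ 0 from rfl,
      show (2 : Fin 3) = Fin.succ 1 from rfl, Fin.cons_succ,
      Fin.insertNthEquiv_apply, Real.norm_eq_abs, sq_abs,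
      show (1 : Fin 2) = Fin.succ 0 from rfl, hcast,
      if_pos rfl, Fin.succ_ne_zero, if_false, if_true, sub_zero]
  -- the lintegral computation
  have key : ∫⁻ x, ENNReal.ofReal (f x)
      = ENNReal.ofReal (2 * π * Real.exp (-a * R) / a) := by
    rw [← hΨ.lintegral_comp hf_meas.ennreal_ofReal]
    have hre : ∀ p : ℝ × ℝ × ℝ, ENNReal.ofReal (f (Ψ p))
        = ENNReal.ofReal
            (Real.exp (-a * √(p.1 ^ 2 + p.2.1 ^ 2 + p.2.2 ^ 2)) /
                √(p.1 ^ 2 + p.2.1 ^ 2 + p.2.2 ^ 2) *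
              (Real.exp (-a * √((p.1 - R) ^ 2 + p.2.1 ^ 2 + p.2.2 ^ 2)) /
                √((p.1 - R) ^ 2 + p.2.1 ^ 2 + p.2.2 ^ 2))) := by
      intro p
      rw [hf]
      dsimp only
      rw [hcoord1 p, hcoord2 p]
    rw [lintegral_congr hre]
    have hK3m : Measurable fun p : ℝ × ℝ × ℝ =>
        ENNReal.ofReal
          (Real.exp (-a * √(p.1 ^ 2 + p.2.1 ^ 2 + p.2.2 ^ 2)) /
              √(p.1 ^ 2 + p.2.1 ^ 2 + p.2.2 ^ 2) *
            (Real.exp (-a * √((p.1 - R) ^ 2 + p.2.1 ^ 2 + p.2.2 ^ 2)) /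
              √((p.1 - R) ^ 2 + p.2.1 ^ 2 + p.2.2 ^ 2))) := by
      have hs1 : Measurable fun p : ℝ × ℝ × ℝ => √(p.1 ^ 2 + p.2.1 ^ 2 + p.2.2 ^ 2) :=
        (Real.continuous_sqrt.comp (((continuous_fst.pow 2).add
          ((continuous_fst.comp continuous_snd).pow 2)).add
          ((continuous_snd.comp continuous_snd).pow 2))).measurable
      have hs2 : Measurable fun p : ℝ × ℝ × ℝ => √((p.1 - R) ^ 2 + p.2.1 ^ 2 + p.2.2 ^ 2) :=
        (Real.continuous_sqrt.comp ((((continuous_fst.sub continuous_const).pow 2).add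
          ((continuous_fst.comp continuous_snd).pow 2)).add
          ((continuous_snd.comp continuous_snd).pow 2))).measurable
      exact (((Real.measurable_exp.comp (hs1.const_mul (-a))).div hs1).mul
        ((Real.measurable_exp.comp (hs2.const_mul (-a))).div hs2)).ennreal_ofReal
    rw [Measure.volume_eq_prod, lintegral_prod _ hK3m.aemeasurable]
    have hK2m : Measurable fun q : ℝ × ℝ =>
        ENNReal.ofReal q.2 * ENNReal.ofReal
          (Real.exp (-a * √(q.1 ^ 2 + q.2 ^ 2)) / √(q.1 ^ 2 + q.2 ^ 2) *
            (Real.exp (-a * √((q.1 - R) ^ 2 + q.2 ^ 2)) / √((q.1 - R) ^ 2 + q.2 ^ 2))) *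
          ENNReal.ofReal (2 * π) := by
      have hs1 : Measurable fun q : ℝ × ℝ => √(q.1 ^ 2 + q.2 ^ 2) :=
        (Real.continuous_sqrt.comp ((continuous_fst.pow 2).add (continuous_snd.pow 2))).measurable
      have hs2 : Measurable fun q : ℝ × ℝ => √((q.1 - R) ^ 2 + q.2 ^ 2) :=
        (Real.continuous_sqrt.comp (((continuous_fst.sub continuous_const).pow 2).add
          (continuous_snd.pow 2))).measurable
      exact ((measurable_snd.ennreal_ofReal).mul
        ((((Real.measurable_exp.comp (hs1.const_mul (-a))).div hs1).mul
          ((Real.measurable_exp.comp (hs2.const_mul (-a))).div hs2)).ennreal_ofReal)).mul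
        measurable_const
    have hpolar : ∀ z : ℝ, (∫⁻ q : ℝ × ℝ,
        ENNReal.ofReal
          (Real.exp (-a * √(z ^ 2 + q.1 ^ 2 + q.2 ^ 2)) / √(z ^ 2 + q.1 ^ 2 + q.2 ^ 2) *
            (Real.exp (-a * √((z - R) ^ 2 + q.1 ^ 2 + q.2 ^ 2)) /
              √((z - R) ^ 2 + q.1 ^ 2 + q.2 ^ 2))))
        = ∫⁻ ρ in Ioi (0:ℝ),
            ENNReal.ofReal ρ * ENNReal.ofReal
              (Real.exp (-a * √(z ^ 2 + ρ ^ 2)) / √(z ^ 2 + ρ ^ 2) *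
                (Real.exp (-a * √((z - R) ^ 2 + ρ ^ 2)) / √((z - R) ^ 2 + ρ ^ 2))) *
              ENNReal.ofReal (2 * π) := by
      intro z
      rw [my_lintegral_comp_polarCoord_symm]
      have hcg : ∀ q ∈ polarCoord.target,
          ENNReal.ofReal q.1 * ENNReal.ofReal
            (Real.exp (-a * √(z ^ 2 + (polarCoord.symm q).1 ^ 2 + (polarCoord.symm q).2 ^ 2)) /
                √(z ^ 2 + (polarCoord.symm q).1 ^ 2 + (polarCoord.symm q).2 ^ 2) *
              (Real.exp (-a *
                  √((z - R) ^ 2 + (polarCoord.symm q).1 ^ 2 + (polarCoord.symm q).2 ^ 2)) /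
                √((z - R) ^ 2 + (polarCoord.symm q).1 ^ 2 + (polarCoord.symm q).2 ^ 2)))
          = ENNReal.ofReal q.1 * ENNReal.ofReal
              (Real.exp (-a * √(z ^ 2 + q.1 ^ 2)) / √(z ^ 2 + q.1 ^ 2) *
                (Real.exp (-a * √((z - R) ^ 2 + q.1 ^ 2)) / √((z - R) ^ 2 + q.1 ^ 2))) := by
        intro q hq
        have h1 : z ^ 2 + (polarCoord.symm q).1 ^ 2 + (polarCoord.symm q).2 ^ 2
            = z ^ 2 + q.1 ^ 2 := by
          rw [polarCoord_symm_apply]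
          dsimp only
          linear_combination q.1 ^ 2 * Real.sin_sq_add_cos_sq q.2
        have h2 : (z - R) ^ 2 + (polarCoord.symm q).1 ^ 2 + (polarCoord.symm q).2 ^ 2
            = (z - R) ^ 2 + q.1 ^ 2 := by
          rw [polarCoord_symm_apply]
          dsimp only
          linear_combination q.1 ^ 2 * Real.sin_sq_add_cos_sq q.2
        rw [h1, h2]
      rw [setLIntegral_congr_fun polarCoord.open_target.measurableSet
        hcg]
      rw [polarCoord_target, Measure.volume_eq_prod, ← Measure.prod_restrict,
        lintegral_prod _ (by fun_prop : Measurable fun q : ℝ × ℝ =>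
          ENNReal.ofReal q.1 * ENNReal.ofReal
            (Real.exp (-a * √(z ^ 2 + q.1 ^ 2)) / √(z ^ 2 + q.1 ^ 2) *
              (Real.exp (-a * √((z - R) ^ 2 + q.1 ^ 2)) / √((z - R) ^ 2 + q.1 ^ 2)))).aemeasurable]
      refine lintegral_congr fun ρ => ?_
      simp only [lintegral_const, Measure.restrict_apply_univ, Real.volume_Ioo]
      rw [show π - -π = 2 * π by ring]
    rw [lintegral_congr hpolar]
    have hfub2 : ∫⁻ p in (univ : Set ℝ) ×ˢ Ioi (0:ℝ),
        (ENNReal.ofReal p.2 * ENNReal.ofReal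
          (Real.exp (-a * √(p.1 ^ 2 + p.2 ^ 2)) / √(p.1 ^ 2 + p.2 ^ 2) *
            (Real.exp (-a * √((p.1 - R) ^ 2 + p.2 ^ 2)) / √((p.1 - R) ^ 2 + p.2 ^ 2))) *
          ENNReal.ofReal (2 * π))
        = ∫⁻ z : ℝ, ∫⁻ ρ in Ioi (0:ℝ),
            ENNReal.ofReal ρ * ENNReal.ofReal
              (Real.exp (-a * √(z ^ 2 + ρ ^ 2)) / √(z ^ 2 + ρ ^ 2) *
                (Real.exp (-a * √((z - R) ^ 2 + ρ ^ 2)) / √((z - R) ^ 2 + ρ ^ 2))) *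
              ENNReal.ofReal (2 * π) := by
      rw [Measure.volume_eq_prod, ← Measure.prod_restrict, Measure.restrict_univ,
        lintegral_prod _ hK2m.aemeasurable]
    rw [← hfub2, lintegral_cov hR]
    have hsimp : ∀ s ∈ Dset R,
        ENNReal.ofReal (s.1 * s.2 / (R * rf R s)) *
          (ENNReal.ofReal (Phi R s).2 * ENNReal.ofReal
            (Real.exp (-a * √((Phi R s).1 ^ 2 + (Phi R s).2 ^ 2)) /
                √((Phi R s).1 ^ 2 + (Phi R s).2 ^ 2) *
              (Real.exp (-a * √(((Phi R s).1 - R) ^ 2 + (Phi R s).2 ^ 2)) /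
                √(((Phi R s).1 - R) ^ 2 + (Phi R s).2 ^ 2))) *
            ENNReal.ofReal (2 * π))
        = ENNReal.ofReal ((2 * π / R) * (Real.exp (-a * s.1) * Real.exp (-a * s.2))) := by
      intro s hs
      have hrfpos := rf_pos hR hs
      have h1 : (Phi R s).1 ^ 2 + (Phi R s).2 ^ 2 = s.1 ^ 2 := by
        show zf R s ^ 2 + rf R s ^ 2 = s.1 ^ 2
        rw [sq_rf hR hs]; ring
      have h2 : ((Phi R s).1 - R) ^ 2 + (Phi R s).2 ^ 2 = s.2 ^ 2 := by
        show (zf R s - R) ^ 2 + rf R s ^ 2 = s.2 ^ 2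
        rw [sq_rf hR hs]
        linear_combination - sq_two_of_zf hR s
      rw [h1, h2, Real.sqrt_sq hs.1.le, Real.sqrt_sq hs.2.1.le]
      show ENNReal.ofReal (s.1 * s.2 / (R * rf R s)) *
          (ENNReal.ofReal (rf R s) * ENNReal.ofReal _ * ENNReal.ofReal (2 * π)) = _
      have hCnn : (0:ℝ) ≤ Real.exp (-a * s.1) / s.1 * (Real.exp (-a * s.2) / s.2) :=
        mul_nonneg (div_nonneg (Real.exp_pos _).le hs.1.le)
          (div_nonneg (Real.exp_pos _).le hs.2.1.le)
      rw [← ENNReal.ofReal_mul hrfpos.le,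
        ← ENNReal.ofReal_mul (mul_nonneg hrfpos.le hCnn),
        ← ENNReal.ofReal_mul (div_nonneg (mul_nonneg hs.1.le hs.2.1.le)
          (mul_nonneg hR.le hrfpos.le))]
      congr 1
      field_simp [hs.1.ne', hs.2.1.ne', hrfpos.ne']
    rw [setLIntegral_congr_fun measurableSet_Dset hsimp]
    have hconst : (0:ℝ) ≤ 2 * π / R := by positivity
    simp only [ENNReal.ofReal_mul hconst]
    rw [lintegral_const_mul' _ _ ENNReal.ofReal_ne_top, J_val ha hR,
      ← ENNReal.ofReal_mul hconst]
    congr 1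
    field_simp
  have hint : ∫ x, f x = 2 * π * Real.exp (-a * R) / a := by
    rw [integral_eq_lintegral_of_nonneg_ae (Filter.Eventually.of_forall hf_nonneg)
      hf_meas.aestronglyMeasurable, key, ENNReal.toReal_ofReal (by positivity)]
  rw [hint]
  have hπ : (2 : ℝ) * π ≠ 0 := by positivity
  field_simp

end Yukawa

/-- Yukawa kernel reproducing identity in `ℝ³`:
`e^{-a|ξ-η|} = (a/2π) ∫_{ℝ³} (e^{-a|x-ξ|}/|x-ξ|)(e^{-a|x-η|}/|x-η|) dx`. -/
theorem yukawa_gram_identity (a : ℝ) (ha : 0 < a)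
    (ξ η : EuclideanSpace ℝ (Fin 3)) (hne : ξ ≠ η) :
    Real.exp (-a * dist ξ η) =
      a / (2 * Real.pi) *
        ∫ x : EuclideanSpace ℝ (Fin 3),
          Real.exp (-a * dist x ξ) / dist x ξ * (Real.exp (-a * dist x η) / dist x η) :=
  Yukawa.yukawa_gram_identity a ha ξ η hne
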